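/- With the same setup, det(I + G_R C_v★) = det(F₁ᴴF₁)⁻¹, where C_v★ = C^{1/2} F₁ F₁⁺ C^{1/2}. -/

import Mathlib

open Matrix
open scoped ComplexOrder

/-- Identity (28): with `Fᴴ(I + S G_R S)F = I`, `Fᴴ(I + S G_D S)F = diag(d)`,
`F₁` the columns of `F` with `dᵢ > 1`, and `C_v★ = S (F₁ F₁⁺) S`, it holds that
`det(I + G_R C_v★) = det(F₁ᴴF₁)⁻¹`. -/
theorem stmt_5 (n : ℕ) (C S GR GD : Matrix (Fin n) (Fin n) ℂ)
    (hC : C.PosDef) (hS : S.PosSemidef) (hSC : S * S = C)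
    (hGR : GR.PosSemidef) (hGD : GD.PosSemidef)
    (F : Matrix (Fin n) (Fin n) ℂ) (hF : IsUnit F) (d : Fin n → ℝ)
    (hI : Fᴴ * (1 + S * GR * S) * F = 1)
    (hΛ : Fᴴ * (1 + S * GD * S) * F = Matrix.diagonal (fun i => (d i : ℂ))) :
    let F₁ : Matrix (Fin n) {i : Fin n // 1 < d i} ℂ := F.submatrix id Subtype.val
    let Cvstar := S * (F₁ * (F₁ᴴ * F₁)⁻¹ * F₁ᴴ) * S
    (1 + GR * Cvstar).det = (F₁ᴴ * F₁).det⁻¹ := by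
  intro F₁ Cvstar
  classical
  set v : {i : Fin n // 1 < d i} → Fin n := Subtype.val with hv
  have hvinj : Function.Injective v := Subtype.val_injective
  -- key identity: Fᴴ (S GR S) F = 1 - Fᴴ F
  have hkey : Fᴴ * (S * GR * S) * F = 1 - Fᴴ * F := by
    have := hI
    rw [Matrix.mul_add, Matrix.add_mul, Matrix.mul_one] at this
    linear_combination (norm := noncomm_ring) this
  -- restrict to the columns in F₁
  have hF₁H : F₁ᴴ = Fᴴ.submatrix v id := by
    ext i j; simp [F₁, Matrix.conjTranspose_apply, Matrix.submatrix_apply, hv]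
  have hsub : F₁ᴴ * (S * GR * S) * F₁ = 1 - F₁ᴴ * F₁ := by
    have h1 : F₁ᴴ * (S * GR * S) * F₁ = (Fᴴ * (S * GR * S) * F).submatrix v v := by
      rw [Matrix.submatrix_mul _ _ v id v Function.bijective_id,
        Matrix.submatrix_mul _ _ v id id Function.bijective_id, hF₁H]
      simp [F₁, hv]
    have h2 : (Fᴴ * F).submatrix v v = F₁ᴴ * F₁ := by
      rw [Matrix.submatrix_mul _ _ v id v Function.bijective_id, hF₁H]
    rw [h1, hkey]
    ext i j
    simp only [Matrix.submatrix_apply, Matrix.sub_apply]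
    rw [show ((Fᴴ * F) (v i) (v j)) = (F₁ᴴ * F₁) i j from congrFun (congrFun h2 i) j]
    simp [Matrix.one_apply, Subtype.val_inj, v]
  -- F₁ mulVec is injective
  have hmulvec0 : ∀ x : {i : Fin n // 1 < d i} → ℂ, F₁ *ᵥ x = 0 → x = 0 := by
    intro x hx
    set y : Fin n → ℂ := fun c => if h : 1 < d c then x ⟨c, h⟩ else 0 with hy
    have hFy : F *ᵥ y = F₁ *ᵥ x := by
      ext i
      simp only [Matrix.mulVec, dotProduct, F₁, Matrix.submatrix_apply, id]
      have hsplit : ∑ c : Fin n, F i c * y c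
          = ∑ c ∈ Finset.univ.filter (fun c => 1 < d c), F i c * y c := by
        symm
        apply Finset.sum_subset (Finset.filter_subset _ _)
        intro c _ hc
        simp only [Finset.mem_filter, Finset.mem_univ, true_and] at hc
        simp [hy, hc]
      rw [hsplit, Finset.sum_subtype (p := fun c => 1 < d c) _ (by simp) (fun c => F i c * y c)]
      apply Finset.sum_congr rfl
      intro a _
      simp [hy, a.prop, v]
    have hy0 : y = 0 := by
      have := hF.invertible
      have : F *ᵥ y = F *ᵥ 0 := by rw [hFy, hx, Matrix.mulVec_zero]
      exact (Matrix.mulVec_injective_of_invertible F) this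
    funext j
    have := congrFun hy0 j.val
    simpa [hy, j.prop] using this
  -- A = F₁ᴴ F₁ is a unit
  set A := F₁ᴴ * F₁ with hA
  have hAunit : IsUnit A := by
    rw [← Matrix.mulVec_injective_iff_isUnit]
    intro x y hxy
    have h0 : A *ᵥ (x - y) = 0 := by
      rw [Matrix.mulVec_sub, hxy, sub_self]
    have h1 : F₁ *ᵥ (x - y) = 0 := by
      have hd : (star (x - y)) ⬝ᵥ (A *ᵥ (x - y)) = 0 := by rw [h0, dotProduct_zero]
      rw [hA, ← Matrix.mulVec_mulVec, Matrix.dotProduct_mulVec, ← Matrix.star_mulVec] at hd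
      exact dotProduct_star_self_eq_zero.mp hd
    have := hmulvec0 _ h1
    exact sub_eq_zero.mp this
  have hAinv : A⁻¹ * A = 1 := Matrix.nonsing_inv_mul A (hAunit.map Matrix.detMonoidHom)
  -- determinant computation
  have hdet : (1 + GR * Cvstar).det = (1 + A⁻¹ * (F₁ᴴ * (S * GR * S) * F₁)).det := by
    have e1 : GR * Cvstar = (GR * S * F₁) * (A⁻¹ * (F₁ᴴ * S)) := by
      simp only [Cvstar, hA, Matrix.mul_assoc]
    rw [e1, Matrix.det_one_add_mul_comm]
    congr 1
    congr 1
    simp only [Matrix.mul_assoc]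
  rw [hdet, hsub]
  have : (1 : Matrix {i : Fin n // 1 < d i} {i : Fin n // 1 < d i} ℂ) + A⁻¹ * (1 - A) = A⁻¹ := by
    rw [Matrix.mul_sub, Matrix.mul_one, hAinv]
    noncomm_ring
  rw [this, Matrix.det_nonsing_inv, hA]
  simp [Ring.inverse_eq_inv]
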